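/- Marginal coverage of split conformal prediction (lower bound): let W_1, …, W_{N+1} be exchangeable random elements of a measurable space 𝒲 (representing the calibration triples (X_i, Y_i, Ŷ_i) and the test triple), let s : 𝒲 → ℝ be a measurable nonconformity score function, and set s_i := s(W_i). Then for every α ∈ [0,1], P( s(W_{N+1}) ≤ Q_{1−α}(s_1, …, s_N, +∞) ) ≥ 1 − α; equivalently, the conformal prediction set Ĉ_α built from the calibration scores covers the test response with probability at least 1 − α. -/

import Mathlib

open MeasureTheory Finset
open scoped ENNReal

/-- Exchangeability: for every permutation `π`, the joint law of the permuted family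
equals the joint law of the original family. -/
def Exchangeable {Ω : Type*} [MeasurableSpace Ω] (P : Measure Ω)
    {m : ℕ} {α : Type*} [MeasurableSpace α] (Z : Fin m → Ω → α) : Prop :=
  ∀ π : Equiv.Perm (Fin m),
    Measure.map (fun ω => fun i => Z (π i) ω) P = Measure.map (fun ω => fun i => Z i ω) P

/-- Empirical `β`-quantile of extended-real values `z 1, …, z m`:
`inf { x ∈ ℝ : (1/m) · #{ i : z i ≤ x } ≥ β }`, with `inf ∅ = +∞` (in `EReal`). -/
noncomputable def empQuantile {m : ℕ} (z : Fin m → EReal) (β : ℝ) : EReal :=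
  sInf ((fun r : ℝ => (r : EReal)) ''
    {r : ℝ | β ≤ ((Finset.univ.filter (fun i => z i ≤ (r : EReal))).card : ℝ) / m})

/-- The empirical `β`-quantile of the `n + 1` values `z 1, …, z n, +∞`. -/
noncomputable def augQuantile {n : ℕ} (z : Fin n → ℝ) (β : ℝ) : EReal :=
  empQuantile (Fin.snoc (fun i => ((z i : ℝ) : EReal)) ⊤) β

lemma card_filter_perm {m : ℕ} (σ : Equiv.Perm (Fin m)) (p : Fin m → Prop) [DecidablePred p] :
    (univ.filter (fun i => p (σ i))).card = (univ.filter p).card := by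
  apply Finset.card_bij (fun i _ => σ i)
  · intro a ha; simpa using (Finset.mem_filter.mp ha).2
  · intro a _ b _ h; exact σ.injective h
  · intro b hb
    exact ⟨σ.symm b, by simpa using (Finset.mem_filter.mp hb).2, by simp⟩

lemma snoc_count {N : ℕ} (z : Fin N → ℝ) (r : ℝ) :
    (univ.filter fun i : Fin (N+1) =>
        (Fin.snoc (fun i => ((z i : ℝ) : EReal)) ⊤ : Fin (N+1) → EReal) i ≤ (r : EReal)).card
      = (univ.filter fun i : Fin N => z i ≤ r).card := by
  rw [Finset.card_filter, Finset.card_filter, Fin.sum_univ_castSucc]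
  simp [Fin.snoc_castSucc, Fin.snoc_last, EReal.coe_le_coe_iff, top_le_iff]

lemma quantile_iff {N : ℕ} (z : Fin N → ℝ) (t β : ℝ) (hβ : 0 < β) :
    ((t : EReal) ≤ augQuantile z β ↔
      (univ.filter fun i => z i < t).card < ⌈β * (N + 1)⌉₊) := by
  have hset : ∀ r : ℝ,
      (β ≤ ((univ.filter fun i : Fin (N+1) =>
          (Fin.snoc (fun i => ((z i : ℝ) : EReal)) ⊤ : Fin (N+1) → EReal) i ≤ (r : EReal)).card : ℝ)
        / (N+1 : ℕ))
      ↔ ⌈β * (N+1)⌉₊ ≤ (univ.filter fun i : Fin N => z i ≤ r).card := by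
    intro r
    rw [snoc_count, le_div_iff₀ (by positivity)]
    rw [Nat.ceil_le]
    push_cast
    ring_nf
  rw [augQuantile, empQuantile]
  constructor
  · intro h
    by_contra hc
    push_neg at hc
    have hne : (univ.filter fun i => z i < t).Nonempty := by
      rw [← Finset.card_pos]
      have : 0 < ⌈β * (N + 1)⌉₊ := Nat.ceil_pos.mpr (by positivity)
      omega
    set r : ℝ := (univ.filter fun i => z i < t).sup' hne z with hr
    have hrt : r < t := by
      rw [hr]
      exact Finset.sup'_lt_iff hne |>.mpr (fun i hi => (Finset.mem_filter.mp hi).2)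
    have hsub : (univ.filter fun i => z i < t) ⊆ (univ.filter fun i => z i ≤ r) := by
      intro i hi
      simp only [Finset.mem_filter, Finset.mem_univ, true_and] at hi ⊢
      exact Finset.le_sup' z (Finset.mem_filter.mpr ⟨Finset.mem_univ i, hi⟩)
    have hrmem : ⌈β * (N+1)⌉₊ ≤ (univ.filter fun i : Fin N => z i ≤ r).card :=
      le_trans hc (Finset.card_le_card hsub)
    have hle : sInf ((fun r : ℝ => (r : EReal)) ''
        {r : ℝ | β ≤ ((Finset.univ.filter (fun i =>
          (Fin.snoc (fun i => ((z i : ℝ) : EReal)) ⊤ : Fin (N+1) → EReal) i ≤ (r : EReal))).card : ℝ) / (N+1 : ℕ)}) ≤ (r : EReal) := by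
      apply sInf_le
      exact ⟨r, (hset r).mpr hrmem, rfl⟩
    have := le_trans h hle
    exact absurd (EReal.coe_le_coe_iff.mp this) (not_le.mpr hrt)
  · intro hc
    apply le_sInf
    rintro x ⟨r, hrmem, rfl⟩
    rw [Set.mem_setOf_eq, hset r] at hrmem
    by_contra hlt
    push_neg at hlt
    have hrt : r < t := EReal.coe_lt_coe_iff.mp hlt
    have hsub : (univ.filter fun i : Fin N => z i ≤ r) ⊆ (univ.filter fun i => z i < t) := by
      intro i hi
      simp only [Finset.mem_filter, Finset.mem_univ, true_and] at hi ⊢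
      linarith
    have := le_trans hrmem (Finset.card_le_card hsub)
    omega

lemma count_rank {m k : ℕ} (hk : k ≤ m) (v : Fin m → ℝ) :
    k ≤ (univ.filter fun j => (univ.filter fun i => v i < v j).card < k).card := by
  rcases Nat.eq_zero_or_pos k with hk0 | hk1
  · simp [hk0]
  have hm : 0 < m := lt_of_lt_of_le hk1 hk
  set σ := Tuple.sort v with hσ
  have hmono : Monotone (v ∘ σ) := Tuple.monotone_sort v
  set p : Fin m := ⟨k - 1, by omega⟩ with hp
  set x : ℝ := v (σ p) with hx
  set B : Finset (Fin m) := Finset.image (fun i : Fin k => σ (Fin.castLE hk i)) univ with hB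
  have hBcard : B.card = k := by
    rw [hB]
    rw [Finset.card_image_of_injective _ (fun a b h => (Fin.castLE_injective hk) (σ.injective h))]
    simp
  have hcount_x : (univ.filter fun i => v i < x).card ≤ k - 1 := by
    rw [← card_filter_perm σ (fun i => v i < x)]
    have hsub : (univ.filter fun i => v (σ i) < x) ⊆ (univ.filter fun i : Fin m => (i : ℕ) < k - 1) := by
      intro i hi
      simp only [Finset.mem_filter, Finset.mem_univ, true_and] at hi ⊢
      by_contra hge
      push_neg at hge
      have : x ≤ v (σ i) := hmono (show p ≤ i from hge)
      linarith
    calc (univ.filter fun i => v (σ i) < x).card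
        ≤ (univ.filter fun i : Fin m => (i : ℕ) < k - 1).card := Finset.card_le_card hsub
      _ ≤ k - 1 := by
          have h2 : (univ.filter fun i : Fin m => (i : ℕ) < k - 1).card ≤ (Finset.range (k-1)).card := by
            apply Finset.card_le_card_of_injOn (fun i : Fin m => (i : ℕ))
            · intro i hi
              simp only [Finset.mem_coe, Finset.mem_filter, Finset.mem_univ, true_and] at hi
              exact Finset.mem_range.mpr hi
            · intro a _ b _ h
              exact Fin.val_injective h
          simpa using h2
  apply le_trans (le_of_eq hBcard.symm)
  apply Finset.card_le_card
  rw [hB]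
  intro j hj
  simp only [Finset.mem_image, Finset.mem_univ, true_and] at hj
  obtain ⟨i, hi⟩ := hj
  simp only [Finset.mem_filter, Finset.mem_univ, true_and]
  have hvj : v j ≤ x := by
    rw [← hi]
    exact hmono (show Fin.castLE hk i ≤ p from by
      simp only [Fin.le_def, Fin.coe_castLE, hp]
      omega)
  have hsub : (univ.filter fun i => v i < v j) ⊆ (univ.filter fun i => v i < x) := by
    intro a ha
    simp only [Finset.mem_filter, Finset.mem_univ, true_and] at ha ⊢
    linarith
  have := le_trans (Finset.card_le_card hsub) hcount_x
  omega

/-- Marginal coverage of split conformal prediction (lower bound): the test score is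
at most the augmented `(1 - α)`-quantile of the calibration scores with probability
at least `1 - α`; equivalently, the conformal set
`Ĉ_α = { w : s w ≤ Q_{1-α}(s_1, …, s_N, +∞) }` covers the test point `W (N+1)`
with probability at least `1 - α`. -/
theorem stmt2 {Ω : Type*} [MeasurableSpace Ω] (P : Measure Ω) [IsProbabilityMeasure P]
    {𝒲 : Type*} [MeasurableSpace 𝒲]
    (N : ℕ) (W : Fin (N + 1) → Ω → 𝒲) (hmeas : ∀ i, Measurable (W i))
    (hexch : Exchangeable P W)
    (s : 𝒲 → ℝ) (hs : Measurable s)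
    (α : ℝ) (hα0 : 0 ≤ α) (hα1 : α ≤ 1) :
    ENNReal.ofReal (1 - α) ≤
      P {ω | W (Fin.last N) ω ∈
          {w : 𝒲 | (s w : EReal) ≤
            augQuantile (fun i : Fin N => s (W (Fin.castSucc i) ω)) (1 - α)}} := by
  rcases eq_or_lt_of_le hα1 with h1 | hlt
  · rw [← h1]; simp
  have hβ : 0 < 1 - α := by linarith
  set β := 1 - α with hβdef
  set k := ⌈β * (N + 1)⌉₊ with hkdef
  have hk1 : 1 ≤ k := Nat.ceil_pos.mpr (by positivity)
  have hkm : k ≤ N + 1 := by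
    rw [hkdef]
    apply Nat.ceil_le.mpr
    push_cast
    nlinarith
  set S : Fin (N+1) → Ω → ℝ := fun i ω => s (W i ω) with hSdef
  have hSmeas : ∀ i, Measurable (S i) := fun i => hs.comp (hmeas i)
  set V : Ω → (Fin (N+1) → ℝ) := fun ω i => S i ω with hVdef
  have hV : Measurable V := measurable_pi_lambda _ hSmeas
  classical
  set B : Fin (N+1) → Set (Fin (N+1) → ℝ) := fun j =>
    {v | (univ.filter fun i => v i < v j).card < k} with hBdef
  have hcard_meas : ∀ j : Fin (N+1), Measurable (fun v : Fin (N+1) → ℝ =>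
      (univ.filter fun i => v i < v j).card) := by
    intro j
    have heq : (fun v : Fin (N+1) → ℝ => (univ.filter fun i => v i < v j).card)
        = fun v => ∑ i, if v i < v j then 1 else 0 := by
      funext v; rw [Finset.card_filter]
    rw [heq]
    apply Finset.measurable_sum
    intro i _
    exact Measurable.ite (measurableSet_lt (measurable_pi_apply i) (measurable_pi_apply j))
      measurable_const measurable_const
  have hBmeas : ∀ j, MeasurableSet (B j) := by
    intro j
    have : B j = (fun v : Fin (N+1) → ℝ =>
        (univ.filter fun i => v i < v j).card) ⁻¹' (Set.Iio k) := rfl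
    rw [this]
    exact (hcard_meas j) (Set.to_countable _).measurableSet
  -- identify the coverage event
  have hev : {ω | W (Fin.last N) ω ∈
      {w : 𝒲 | (s w : EReal) ≤ augQuantile (fun i : Fin N => s (W (Fin.castSucc i) ω)) β}}
      = V ⁻¹' (B (Fin.last N)) := by
    ext ω
    simp only [Set.mem_setOf_eq, Set.mem_preimage, hBdef]
    rw [quantile_iff _ _ _ hβ]
    have hcc : (univ.filter fun i : Fin (N+1) => V ω i < V ω (Fin.last N)).card
        = (univ.filter fun i : Fin N => s (W (Fin.castSucc i) ω) < s (W (Fin.last N) ω)).card := by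
      rw [Finset.card_filter, Finset.card_filter, Fin.sum_univ_castSucc]
      simp [hVdef, hSdef]
    rw [hcc]
  -- exchangeability of the score vector
  have hg : Measurable (fun v : Fin (N+1) → 𝒲 => fun i => s (v i)) :=
    measurable_pi_lambda _ (fun i => hs.comp (measurable_pi_apply i))
  have hmap : ∀ σ : Equiv.Perm (Fin (N+1)),
      Measure.map (fun ω => fun i => S (σ i) ω) P = Measure.map V P := by
    intro σ
    have hW : Measurable (fun ω => fun i : Fin (N+1) => W i ω) :=
      measurable_pi_lambda _ hmeas
    have hWσ : Measurable (fun ω => fun i : Fin (N+1) => W (σ i) ω) :=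
      measurable_pi_lambda _ (fun i => hmeas _)
    have h2 := congrArg (Measure.map (fun v : Fin (N+1) → 𝒲 => fun i => s (v i))) (hexch σ)
    rwa [Measure.map_map hg hWσ, Measure.map_map hg hW] at h2
  -- all the events have equal probability
  have hPA : ∀ j, P (V ⁻¹' (B j)) = P (V ⁻¹' (B (Fin.last N))) := by
    intro j
    set σ : Equiv.Perm (Fin (N+1)) := Equiv.swap j (Fin.last N) with hσdef
    have hBrel : (fun v : Fin (N+1) → ℝ => v ∘ σ) ⁻¹' (B (Fin.last N)) = B j := by
      have h1 : σ (Fin.last N) = j := Equiv.swap_apply_right j (Fin.last N)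
      ext v
      simp only [Set.mem_preimage, hBdef, Set.mem_setOf_eq, Function.comp, h1]
      rw [card_filter_perm σ (fun i => v i < v j)]
    have hVσ : Measurable (fun ω => fun i : Fin (N+1) => S (σ i) ω) :=
      measurable_pi_lambda _ (fun i => hSmeas _)
    have hpre : V ⁻¹' (B j) = (fun ω => fun i : Fin (N+1) => S (σ i) ω) ⁻¹' (B (Fin.last N)) := by
      rw [← hBrel, ← Set.preimage_comp]
      rfl
    rw [hpre, ← Measure.map_apply hVσ (hBmeas _), hmap σ,
      Measure.map_apply hV (hBmeas _)]
  -- pointwise counting bound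
  have hsum : ∀ ω, (k : ℝ≥0∞) ≤ ∑ j, (V ⁻¹' (B j)).indicator (fun _ => (1:ℝ≥0∞)) ω := by
    intro ω
    have h := count_rank hkm (V ω)
    have heq : ∑ j, (V ⁻¹' (B j)).indicator (fun _ => (1:ℝ≥0∞)) ω
        = ((univ.filter fun j => (univ.filter fun i => V ω i < V ω j).card < k).card : ℝ≥0∞) := by
      rw [Finset.card_filter]
      push_cast
      apply Finset.sum_congr rfl
      intro j _
      by_cases hmem : (univ.filter fun i => V ω i < V ω j).card < k <;>
        simp [Set.indicator_apply, Set.mem_preimage, hBdef, Set.mem_setOf_eq, hmem]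
    rw [heq]
    exact_mod_cast h
  have hint : (k : ℝ≥0∞) ≤ ∑ j, P (V ⁻¹' (B j)) := by
    have h0 : (k : ℝ≥0∞) = ∫⁻ _, (k : ℝ≥0∞) ∂P := by simp
    rw [h0]
    calc ∫⁻ _, (k:ℝ≥0∞) ∂P ≤ ∫⁻ ω, ∑ j, (V ⁻¹' (B j)).indicator (fun _ => 1) ω ∂P :=
          lintegral_mono hsum
      _ = ∑ j, ∫⁻ ω, (V ⁻¹' (B j)).indicator (fun _ => 1) ω ∂P :=
          lintegral_finset_sum _ (fun j _ => (measurable_const.indicator (hV (hBmeas j))))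
      _ = ∑ j, P (V ⁻¹' (B j)) := by
          apply Finset.sum_congr rfl
          intro j _
          rw [lintegral_indicator (hV (hBmeas j))]
          simp
  have hfin : (k : ℝ≥0∞) ≤ ((N:ℝ≥0∞)+1) * P (V ⁻¹' (B (Fin.last N))) := by
    calc (k:ℝ≥0∞) ≤ ∑ j, P (V ⁻¹' (B j)) := hint
      _ = ∑ j : Fin (N+1), P (V ⁻¹' (B (Fin.last N))) := Finset.sum_congr rfl (fun j _ => hPA j)
      _ = ((N:ℝ≥0∞)+1) * P (V ⁻¹' (B (Fin.last N))) := by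
          rw [Finset.sum_const, Finset.card_univ, Fintype.card_fin, nsmul_eq_mul]
          push_cast
          ring
  rw [hev]
  have hdiv : (k : ℝ≥0∞) / ((N:ℝ≥0∞)+1) ≤ P (V ⁻¹' (B (Fin.last N))) := by
    rw [ENNReal.div_le_iff (by simp) (by simp)]
    rwa [mul_comm] at hfin
  refine le_trans ?_ hdiv
  have hb : β ≤ (k : ℝ) / ((N:ℝ)+1) := by
    rw [le_div_iff₀ (by positivity)]
    exact Nat.le_ceil _
  calc ENNReal.ofReal β ≤ ENNReal.ofReal ((k:ℝ)/((N:ℝ)+1)) := ENNReal.ofReal_le_ofReal hb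
    _ = (k : ℝ≥0∞) / ((N:ℝ≥0∞)+1) := by
        rw [ENNReal.ofReal_div_of_pos (by positivity)]
        congr 1
        · exact ENNReal.ofReal_natCast k
        · have : ((N:ℝ)+1) = ((N+1:ℕ):ℝ) := by push_cast; ring
          rw [this, ENNReal.ofReal_natCast]
          push_cast; ring
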